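/- arXiv:1208.6424 — 2 statements merged into one kernel-verified Lean document; each statement's English description precedes it below -/
import Mathlib

section
/- In the q-Brauer algebra, for 1 ≤ j < k one has g_{2j-1} g_{2j} e_{(k)} = g_{2j+1} g_{2j} e_{(k)} and g_{2j-1}^{-1} g_{2j}^{-1} e_{(k)} = g_{2j+1}^{-1} g_{2j}^{-1} e_{(k)}. -/
/-- The `q`-Brauer algebra `Br_n(r, q)` (in the sense of Wenzl): an algebra `A` over a commutative
ring `R` with invertible parameters `q`, `r` and `δ = (r−1)/(q−1)`, with generators
`g_1, …, g_{n-1}` (with inverses) and `e`, subject to the Hecke relations (H) for the `g_i`,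
`(E₁)`: `e² = ((r−1)/(q−1)) e`, `(E₂)`: `e g_i = g_i e` for `i > 2`, `e g_1 = g_1 e = q e`,
`e g_2 e = r e`, `e g_2⁻¹ e = q⁻¹ e`, and `(E₃)` involving
`e_{(2)} = e (g_2 g_3 g_1⁻¹ g_2⁻¹) e`. -/
structure QBrauer (R : Type) [CommRing R] (q r δ : Rˣ) (n : ℕ)
    (A : Type) [Ring A] [Algebra R A] where
  g : ℕ → A
  ginv : ℕ → A
  e : A
  param : ((q : R) - 1) * (δ : R) = (r : R) - 1
  mul_ginv : ∀ i, 1 ≤ i → i < n → g i * ginv i = 1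
  ginv_mul : ∀ i, 1 ≤ i → i < n → ginv i * g i = 1
  braid : ∀ i, 1 ≤ i → i + 1 < n → g i * g (i+1) * g i = g (i+1) * g i * g (i+1)
  gcomm : ∀ i j, 1 ≤ i → i + 1 < j → j < n → g i * g j = g j * g i
  quad : ∀ i, 1 ≤ i → i < n → g i * g i = ((q : R) - 1) • g i + (q : R) • (1 : A)
  esq : e * e = (δ : R) • e
  e_g : ∀ i, 2 < i → i < n → e * g i = g i * e
  e_g1 : e * g 1 = (q : R) • e
  g1_e : g 1 * e = (q : R) • e
  e_g2_e : e * g 2 * e = (r : R) • e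
  e_g2inv_e : e * ginv 2 * e = ((q⁻¹ : Rˣ) : R) • e
  E3_left : 4 ≤ n →
    g 2 * g 3 * ginv 1 * ginv 2 * (e * (g 2 * g 3 * ginv 1 * ginv 2) * e)
      = e * (g 2 * g 3 * ginv 1 * ginv 2) * e
  E3_right : 4 ≤ n →
    (e * (g 2 * g 3 * ginv 1 * ginv 2) * e) * (g 2 * g 3 * ginv 1 * ginv 2)
      = e * (g 2 * g 3 * ginv 1 * ginv 2) * e

variable {R : Type} [CommRing R] {q r δ : Rˣ} {n : ℕ} {A : Type} [Ring A] [Algebra R A]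

/-- `g⁺_{l,m} = g_l g_{l+1} ⋯ g_m` (for `l ≤ m`; ascending indices). -/
def gp (b : QBrauer R q r δ n A) (l m : ℕ) : A :=
  ((List.range' l (m + 1 - l)).map b.g).prod

/-- `g⁻_{l,m} = g_l⁻¹ g_{l+1}⁻¹ ⋯ g_m⁻¹` (for `l ≤ m`; ascending indices). -/
def gm (b : QBrauer R q r δ n A) (l m : ℕ) : A :=
  ((List.range' l (m + 1 - l)).map b.ginv).prod

/-- `g⁺_{m,l} = g_m g_{m-1} ⋯ g_l` (for `m ≥ l`; descending indices). -/
def gpd (b : QBrauer R q r δ n A) (m l : ℕ) : A :=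
  (((List.range' l (m + 1 - l)).map b.g).reverse).prod

/-- `g⁻_{m,l} = g_m⁻¹ g_{m-1}⁻¹ ⋯ g_l⁻¹` (for `m ≥ l`; descending indices). -/
def gmd (b : QBrauer R q r δ n A) (m l : ℕ) : A :=
  (((List.range' l (m + 1 - l)).map b.ginv).reverse).prod

/-- The elements `e_{(k)}`, defined inductively by `e_{(1)} = e` and
`e_{(k+1)} = e g⁺_{2,2k+1} g⁻_{1,2k} e_{(k)}`. -/
def ee (b : QBrauer R q r δ n A) : ℕ → A
  | 0 => 1
  | 1 => b.e
  | (k+2) => b.e * gp b 2 (2*(k+1)+1) * gm b 1 (2*(k+1)) * ee b (k+1)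
/- ======================= auxiliary machinery ======================= -/

section Aux

/-- cancellation helpers -/
private lemma qb_shift_mid {x p y : A} (h : x * p = p * y) (z : A) :
    x * (p * z) = p * (y * z) := by
  rw [← mul_assoc, h, mul_assoc]

private lemma qb_comm_shift {x p : A} (h : Commute x p) (z : A) :
    p * (x * z) = x * (p * z) := by
  rw [← mul_assoc, ← h.eq, mul_assoc]

/-- the generators as units -/
def gU (b : QBrauer R q r δ n A) (i : ℕ) (h1 : 1 ≤ i) (h2 : i < n) : Aˣ :=
  ⟨b.g i, b.ginv i, b.mul_ginv i h1 h2, b.ginv_mul i h1 h2⟩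

private lemma qb_inv_g_pair (b : QBrauer R q r δ n A) (i : ℕ) (h1 : 1 ≤ i) (h2 : i < n)
    (z : A) : b.ginv i * (b.g i * z) = z := by
  rw [← mul_assoc, b.ginv_mul i h1 h2, one_mul]

private lemma qb_g_expand (b : QBrauer R q r δ n A) (i : ℕ) (h1 : 1 ≤ i) (h2 : i < n) :
    b.g i = ((q : R) - 1) • (1 : A) + (q : R) • b.ginv i := by
  have hq := congrArg (· * b.ginv i) (b.quad i h1 h2)
  simp only [mul_assoc, b.mul_ginv i h1 h2, mul_one, add_mul, smul_mul_assoc, one_mul] at hq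
  exact hq

private lemma qb_e_ginv (b : QBrauer R q r δ n A) (i : ℕ) (h1 : 2 < i) (h2 : i < n) :
    Commute b.e (b.ginv i) := by
  have h : Commute b.e ((gU b i (by omega) h2 : Aˣ) : A) := b.e_g i h1 h2
  exact h.units_inv_right

private lemma qb_comm_far (b : QBrauer R q r δ n A) {i j : ℕ} (hi1 : 1 ≤ i) (hin : i < n)
    (hj1 : 1 ≤ j) (hjn : j < n) (hd : i + 1 < j ∨ j + 1 < i) :
    Commute (b.g i) (b.g j) ∧ Commute (b.ginv i) (b.g j) ∧
    Commute (b.g i) (b.ginv j) ∧ Commute (b.ginv i) (b.ginv j) := by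
  have hgg : Commute (b.g i) (b.g j) := by
    rcases hd with h | h
    · exact b.gcomm i j hi1 h hjn
    · exact (b.gcomm j i hj1 h hin).symm
  have hgn : Commute (b.g i) (b.ginv j) :=
    Commute.units_inv_right (u := gU b j hj1 hjn) hgg
  have hng : Commute (b.ginv i) (b.g j) :=
    (Commute.units_inv_right (u := gU b i hi1 hin) hgg.symm).symm
  have hnn : Commute (b.ginv i) (b.ginv j) :=
    Commute.units_inv_right (u := gU b j hj1 hjn) hng
  exact ⟨hgg, hng, hgn, hnn⟩

/-- the four local braid-type moves -/
private lemma qb_loc (b : QBrauer R q r δ n A) (i : ℕ) (h1 : 1 ≤ i) (h2 : i + 1 < n) :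
    (b.g (i+1) * (b.g i * b.g (i+1)) = (b.g i * b.g (i+1)) * b.g i) ∧
    (b.ginv (i+1) * (b.g i * b.g (i+1)) = (b.g i * b.g (i+1)) * b.ginv i) ∧
    (b.g (i+1) * (b.ginv i * b.ginv (i+1)) = (b.ginv i * b.ginv (i+1)) * b.g i) ∧
    (b.ginv (i+1) * (b.ginv i * b.ginv (i+1)) = (b.ginv i * b.ginv (i+1)) * b.ginv i) := by
  have hi : i < n := by omega
  have hi1 : 1 ≤ i + 1 := by omega
  set a := gU b i h1 hi with ha
  set c := gU b (i+1) hi1 h2 with hc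
  have hbr : a * c * a = c * a * c := Units.ext (b.braid i h1 h2)
  have hbr' : a⁻¹ * c⁻¹ * a⁻¹ = c⁻¹ * a⁻¹ * c⁻¹ := by
    have h := congrArg (fun x : Aˣ => x⁻¹) hbr
    simp only [mul_inv_rev] at h
    simpa [mul_assoc] using h
  have U1 : c * (a * c) = (a * c) * a := by
    rw [← mul_assoc]; exact hbr.symm
  have U2 : c⁻¹ * (a * c) = (a * c) * a⁻¹ := by
    calc c⁻¹ * (a * c) = c⁻¹ * (a * c * a) * a⁻¹ := by group
      _ = c⁻¹ * (c * a * c) * a⁻¹ := by rw [hbr]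
      _ = (a * c) * a⁻¹ := by group
  have U3 : c * (a⁻¹ * c⁻¹) = (a⁻¹ * c⁻¹) * a := by
    calc c * (a⁻¹ * c⁻¹) = c * (a⁻¹ * c⁻¹ * a⁻¹) * a := by group
      _ = c * (c⁻¹ * a⁻¹ * c⁻¹) * a := by rw [hbr']
      _ = (a⁻¹ * c⁻¹) * a := by group
  have U4 : c⁻¹ * (a⁻¹ * c⁻¹) = (a⁻¹ * c⁻¹) * a⁻¹ := by
    rw [← mul_assoc]; exact hbr'.symm
  exact ⟨congrArg Units.val U1, congrArg Units.val U2,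
    congrArg Units.val U3, congrArg Units.val U4⟩

/- ============ products over ranges ============ -/

private def qbpr (f : ℕ → A) (l m : ℕ) : A := ((List.range' l (m + 1 - l)).map f).prod

private lemma gp_eq_pr (b : QBrauer R q r δ n A) (l m : ℕ) : gp b l m = qbpr b.g l m := rfl
private lemma gm_eq_pr (b : QBrauer R q r δ n A) (l m : ℕ) : gm b l m = qbpr b.ginv l m := rfl

private lemma qbpr_single (f : ℕ → A) (i : ℕ) : qbpr f i i = f i := by
  simp [qbpr, show i + 1 - i = 1 by omega]

private lemma qbpr_split (f : ℕ → A) {l j m : ℕ} (h1 : l ≤ j + 1) (h2 : j ≤ m) :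
    qbpr f l m = qbpr f l j * qbpr f (j+1) m := by
  have hl : List.range' l (m+1-l) = List.range' l (j+1-l) ++ List.range' (j+1) (m+1-(j+1)) := by
    rw [show m+1-l = (j+1-l) + (m+1-(j+1)) by omega, ← List.range'_append_1,
      show l + (j+1-l) = j+1 by omega]
  rw [qbpr, qbpr, qbpr, hl, List.map_append, List.prod_append]

private lemma qb_comm_pr (f : ℕ → A) (x : A) (l m : ℕ)
    (h : ∀ u, l ≤ u → u ≤ m → Commute x (f u)) : Commute x (qbpr f l m) := by
  apply Commute.list_prod_right
  intro y hy
  simp only [List.mem_map] at hy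
  obtain ⟨u, hu, rfl⟩ := hy
  rw [List.mem_range'_1] at hu
  exact h u hu.1 (by omega)

private lemma qbpr_shift (f : ℕ → A) {l m i : ℕ} {x y : A}
    (hl1 : 1 ≤ l) (hli : l ≤ i) (him : i + 1 ≤ m)
    (hloc : x * (f i * f (i+1)) = (f i * f (i+1)) * y)
    (hcx : ∀ u, l ≤ u → u + 1 ≤ i → Commute x (f u))
    (hcy : ∀ u, i + 2 ≤ u → u ≤ m → Commute y (f u)) :
    x * qbpr f l m = qbpr f l m * y := by
  have hs1 : qbpr f l m = qbpr f l (i-1) * qbpr f i m := by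
    have h := qbpr_split f (l := l) (j := i-1) (m := m) (by omega) (by omega)
    rwa [show i - 1 + 1 = i by omega] at h
  have hs2 : qbpr f i m = (f i * f (i+1)) * qbpr f (i+2) m := by
    have h := qbpr_split f (l := i) (j := i+1) (m := m) (by omega) (by omega)
    have h3 : qbpr f i (i+1) = f i * f (i+1) := by
      rw [qbpr_split f (l := i) (j := i) (m := i+1) (by omega) (by omega),
        qbpr_single, qbpr_single]
    rwa [h3, show i + 1 + 1 = i + 2 by omega] at h
  have c1 : Commute x (qbpr f l (i-1)) :=
    qb_comm_pr f x l (i-1) (fun u hu1 hu2 => hcx u hu1 (by omega))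
  have c2 : Commute y (qbpr f (i+2) m) :=
    qb_comm_pr f y (i+2) m (fun u hu1 hu2 => hcy u hu1 hu2)
  rw [hs1, hs2]
  calc x * (qbpr f l (i-1) * ((f i * f (i+1)) * qbpr f (i+2) m))
      = qbpr f l (i-1) * (x * ((f i * f (i+1)) * qbpr f (i+2) m)) :=
        (qb_comm_shift c1 _).symm
    _ = qbpr f l (i-1) * ((f i * f (i+1)) * (y * qbpr f (i+2) m)) := by
        rw [qb_shift_mid hloc]
    _ = qbpr f l (i-1) * ((f i * f (i+1)) * (qbpr f (i+2) m * y)) := by rw [c2.eq]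
    _ = (qbpr f l (i-1) * ((f i * f (i+1)) * qbpr f (i+2) m)) * y := by
        simp only [mul_assoc]

/- ============ the four shift lemmas ============ -/

private lemma qb_shift_gp_g (b : QBrauer R q r δ n A) (l mm i : ℕ)
    (hl : 1 ≤ l) (hli : l ≤ i) (him : i + 1 ≤ mm) (hmn : mm < n) :
    b.g (i+1) * gp b l mm = gp b l mm * b.g i := by
  have hv : i + 1 < n := by omega
  rw [gp_eq_pr]
  refine qbpr_shift b.g hl hli him (qb_loc b i (by omega) hv).1 ?_ ?_
  · intro u h1 h2
    exact (qb_comm_far b (i := i+1) (j := u) (by omega) hv (by omega) (by omega)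
      (Or.inr (by omega))).1
  · intro u h1 h2
    exact (qb_comm_far b (i := i) (j := u) (by omega) (by omega) (by omega) (by omega)
      (Or.inl (by omega))).1

private lemma qb_shift_gp_ginv (b : QBrauer R q r δ n A) (l mm i : ℕ)
    (hl : 1 ≤ l) (hli : l ≤ i) (him : i + 1 ≤ mm) (hmn : mm < n) :
    b.ginv (i+1) * gp b l mm = gp b l mm * b.ginv i := by
  have hv : i + 1 < n := by omega
  rw [gp_eq_pr]
  refine qbpr_shift b.g hl hli him (qb_loc b i (by omega) hv).2.1 ?_ ?_
  · intro u h1 h2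
    exact (qb_comm_far b (i := i+1) (j := u) (by omega) hv (by omega) (by omega)
      (Or.inr (by omega))).2.1
  · intro u h1 h2
    exact (qb_comm_far b (i := i) (j := u) (by omega) (by omega) (by omega) (by omega)
      (Or.inl (by omega))).2.1

private lemma qb_shift_gm_g (b : QBrauer R q r δ n A) (l mm i : ℕ)
    (hl : 1 ≤ l) (hli : l ≤ i) (him : i + 1 ≤ mm) (hmn : mm < n) :
    b.g (i+1) * gm b l mm = gm b l mm * b.g i := by
  have hv : i + 1 < n := by omega
  rw [gm_eq_pr]
  refine qbpr_shift b.ginv hl hli him (qb_loc b i (by omega) hv).2.2.1 ?_ ?_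
  · intro u h1 h2
    exact (qb_comm_far b (i := i+1) (j := u) (by omega) hv (by omega) (by omega)
      (Or.inr (by omega))).2.2.1
  · intro u h1 h2
    exact (qb_comm_far b (i := i) (j := u) (by omega) (by omega) (by omega) (by omega)
      (Or.inl (by omega))).2.2.1

private lemma qb_shift_gm_ginv (b : QBrauer R q r δ n A) (l mm i : ℕ)
    (hl : 1 ≤ l) (hli : l ≤ i) (him : i + 1 ≤ mm) (hmn : mm < n) :
    b.ginv (i+1) * gm b l mm = gm b l mm * b.ginv i := by
  have hv : i + 1 < n := by omega
  rw [gm_eq_pr]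
  refine qbpr_shift b.ginv hl hli him (qb_loc b i (by omega) hv).2.2.2 ?_ ?_
  · intro u h1 h2
    exact (qb_comm_far b (i := i+1) (j := u) (by omega) hv (by omega) (by omega)
      (Or.inr (by omega))).2.2.2
  · intro u h1 h2
    exact (qb_comm_far b (i := i) (j := u) (by omega) (by omega) (by omega) (by omega)
      (Or.inl (by omega))).2.2.2

end Aux

section Aux2

/-- `e_{(2)}` -/
def E2 (b : QBrauer R q r δ n A) : A :=
  b.e * (b.g 2 * b.g 3 * b.ginv 1 * b.ginv 2) * b.e

private lemma ee_succ (b : QBrauer R q r δ n A) (m : ℕ) :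
    ee b (m+2) = b.e * gp b 2 (2*(m+1)+1) * gm b 1 (2*(m+1)) * ee b (m+1) := by
  rw [ee]

private lemma ee_one (b : QBrauer R q r δ n A) : ee b 1 = b.e := by rw [ee]

private lemma ee_tail (b : QBrauer R q r δ n A) :
    ∀ k, 1 ≤ k → ∃ T : A, ee b k = b.e * T := by
  intro k hk
  match k, hk with
  | 1, _ => exact ⟨1, by rw [ee_one, mul_one]⟩
  | (m+2), _ =>
    exact ⟨gp b 2 (2*(m+1)+1) * (gm b 1 (2*(m+1)) * ee b (m+1)), by
      rw [ee_succ]; simp only [mul_assoc]⟩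

private lemma ee_unfold (b : QBrauer R q r δ n A) (t : ℕ) :
    ee b (t+2) = b.e * (gp b 2 (2*t+3) * (gm b 1 (2*t+2) * ee b (t+1))) := by
  rw [ee_succ, show 2*(t+1)+1 = 2*t+3 by omega, show 2*(t+1) = 2*t+2 by omega]
  simp only [mul_assoc]

private lemma gp_head (b : QBrauer R q r δ n A) (t : ℕ) :
    gp b 2 (2*t+3) = b.g 2 * (b.g 3 * gp b 4 (2*t+3)) := by
  rw [gp_eq_pr, qbpr_split b.g (l := 2) (j := 2) (m := 2*t+3) (by omega) (by omega),
    qbpr_single, show (2:ℕ)+1 = 3 from rfl,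
    qbpr_split b.g (l := 3) (j := 3) (m := 2*t+3) (by omega) (by omega),
    qbpr_single, show (3:ℕ)+1 = 4 from rfl, gp_eq_pr]

private lemma gm_head (b : QBrauer R q r δ n A) (t : ℕ) :
    gm b 1 (2*t+2) = b.ginv 1 * (b.ginv 2 * gm b 3 (2*t+2)) := by
  rw [gm_eq_pr, qbpr_split b.ginv (l := 1) (j := 1) (m := 2*t+2) (by omega) (by omega),
    qbpr_single, show (1:ℕ)+1 = 2 from rfl,
    qbpr_split b.ginv (l := 2) (j := 2) (m := 2*t+2) (by omega) (by omega),
    qbpr_single, show (2:ℕ)+1 = 3 from rfl, gm_eq_pr]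

private lemma ee_factor (b : QBrauer R q r δ n A) (t : ℕ) (hn : 2*(t+2) ≤ n) :
    ∃ T : A, ee b (t+2) = E2 b * T := by
  obtain ⟨T0, hT0⟩ := ee_tail b (t+1) (by omega)
  refine ⟨gp b 4 (2*t+3) * (gm b 3 (2*t+2) * T0), ?_⟩
  have c1 : Commute (b.ginv 1) (gp b 4 (2*t+3)) := by
    rw [gp_eq_pr]
    exact qb_comm_pr _ _ _ _ (fun u h1 h2 =>
      (qb_comm_far b (i := 1) (j := u) (by omega) (by omega) (by omega) (by omega)
        (Or.inl (by omega))).2.1)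
  have c2 : Commute (b.ginv 2) (gp b 4 (2*t+3)) := by
    rw [gp_eq_pr]
    exact qb_comm_pr _ _ _ _ (fun u h1 h2 =>
      (qb_comm_far b (i := 2) (j := u) (by omega) (by omega) (by omega) (by omega)
        (Or.inl (by omega))).2.1)
  have c3 : Commute b.e (gp b 4 (2*t+3)) := by
    rw [gp_eq_pr]
    exact qb_comm_pr _ _ _ _ (fun u h1 h2 => b.e_g u (by omega) (by omega))
  have c4 : Commute b.e (gm b 3 (2*t+2)) := by
    rw [gm_eq_pr]
    exact qb_comm_pr _ _ _ _ (fun u h1 h2 => qb_e_ginv b u (by omega) (by omega))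
  rw [ee_unfold, hT0, gp_head, gm_head, E2]
  simp only [mul_assoc]
  rw [qb_comm_shift c1, qb_comm_shift c2, qb_comm_shift c4, qb_comm_shift c3]

end Aux2

section Aux3

private lemma baseB (b : QBrauer R q r δ n A) (hn : 4 ≤ n) :
    b.ginv 1 * (b.ginv 2 * E2 b) = b.ginv 3 * (b.ginv 2 * E2 b) := by
  have h3 : b.g 2 * b.g 3 * b.ginv 1 * b.ginv 2 * E2 b = E2 b := b.E3_left hn
  conv_rhs => rw [← h3]
  simp only [mul_assoc]
  rw [qb_inv_g_pair b 2 (by omega) (by omega), qb_inv_g_pair b 3 (by omega) (by omega)]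

private lemma baseA (b : QBrauer R q r δ n A) (hn : 4 ≤ n) :
    b.g 1 * (b.g 2 * E2 b) = b.g 3 * (b.g 2 * E2 b) := by
  have h1n : 1 < n := by omega
  have h2n : 2 < n := by omega
  have h3n : 3 < n := by omega
  have hA1 : b.g 1 * E2 b = (q : R) • E2 b := by
    unfold E2
    simp only [← mul_assoc]
    rw [b.g1_e]
    simp only [smul_mul_assoc]
  have hA2 : b.g 3 * E2 b = (q : R) • E2 b := by
    unfold E2
    have hbr : ∀ z : A, b.g 3 * (b.g 2 * (b.g 3 * z)) = b.g 2 * (b.g 3 * (b.g 2 * z)) := by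
      intro z
      rw [← mul_assoc, ← mul_assoc, ← b.braid 2 (by omega) h3n]
      simp only [mul_assoc]
    have hpn : ∀ z : A,
        b.g 2 * (b.ginv 1 * (b.ginv 2 * z)) = b.ginv 1 * (b.ginv 2 * (b.g 1 * z)) := by
      intro z
      have h := (qb_loc b 1 le_rfl (by omega)).2.2.1
      rw [show (1:ℕ)+1 = 2 from rfl] at h
      simpa [mul_assoc] using qb_shift_mid h z
    simp only [mul_assoc]
    rw [qb_comm_shift (b.e_g 3 (by omega) h3n), hbr, hpn, b.g1_e]
    simp [mul_smul_comm]
  have hA13 : b.g 1 * E2 b = b.g 3 * E2 b := hA1.trans hA2.symm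
  have c13 : Commute (b.ginv 1) (b.ginv 3) :=
    (qb_comm_far b (i := 1) (j := 3) (by omega) h1n (by omega) h3n (Or.inl (by omega))).2.2.2
  have hA4 : b.ginv 1 * E2 b = b.ginv 3 * E2 b := by
    symm
    calc b.ginv 3 * E2 b
        = b.ginv 3 * (b.ginv 1 * (b.g 1 * E2 b)) := by
          rw [qb_inv_g_pair b 1 (by omega) h1n]
      _ = b.ginv 3 * (b.ginv 1 * (b.g 3 * E2 b)) := by rw [hA13]
      _ = b.ginv 1 * (b.ginv 3 * (b.g 3 * E2 b)) := by rw [qb_comm_shift c13]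
      _ = b.ginv 1 * E2 b := by rw [qb_inv_g_pair b 3 (by omega) h3n]
  have hB := baseB b hn
  have key : b.ginv 1 * (b.g 2 * E2 b) = b.ginv 3 * (b.g 2 * E2 b) := by
    rw [qb_g_expand b 2 (by omega) h2n]
    simp only [mul_add, add_mul, mul_smul_comm, smul_mul_assoc, one_mul, mul_one]
    rw [hA4, hB]
  rw [qb_g_expand b 1 (by omega) h1n, qb_g_expand b 3 (by omega) h3n]
  simp only [add_mul, smul_mul_assoc, one_mul]
  rw [key]

end Aux3

private lemma qb_main (b : QBrauer R q r δ n A) :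
    ∀ j, 1 ≤ j → ∀ k, j < k → 2*k ≤ n →
      (b.g (2*j-1) * (b.g (2*j) * ee b k) = b.g (2*j+1) * (b.g (2*j) * ee b k)) ∧
      (b.ginv (2*j-1) * (b.ginv (2*j) * ee b k) =
        b.ginv (2*j+1) * (b.ginv (2*j) * ee b k)) := by
  intro j
  induction j with
  | zero => intro h; exact absurd h (by omega)
  | succ m ih =>
    intro _ k hjk hkn
    obtain ⟨t, rfl⟩ : ∃ t, k = t + 2 := ⟨k - 2, by omega⟩
    have hn4 : 4 ≤ n := by omega
    rcases Nat.eq_zero_or_pos m with hm | hm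
    · subst hm
      obtain ⟨T, hT⟩ := ee_factor b t (by omega)
      rw [show 2*(0+1)-1 = 1 by norm_num, show 2*(0+1)+1 = 3 by norm_num,
        show 2*(0+1) = 2 by norm_num, hT]
      constructor
      · calc b.g 1 * (b.g 2 * (E2 b * T))
            = (b.g 1 * (b.g 2 * E2 b)) * T := by simp only [mul_assoc]
          _ = (b.g 3 * (b.g 2 * E2 b)) * T := by rw [baseA b hn4]
          _ = b.g 3 * (b.g 2 * (E2 b * T)) := by simp only [mul_assoc]
      · calc b.ginv 1 * (b.ginv 2 * (E2 b * T))
            = (b.ginv 1 * (b.ginv 2 * E2 b)) * T := by simp only [mul_assoc]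
          _ = (b.ginv 3 * (b.ginv 2 * E2 b)) * T := by rw [baseB b hn4]
          _ = b.ginv 3 * (b.ginv 2 * (E2 b * T)) := by simp only [mul_assoc]
    · -- j = m+1 ≥ 2 : push the pair through e, gp, gm and use ih
      have hmt : m ≤ t := by omega
      rw [show 2*(m+1)-1 = 2*m+1 by omega, show 2*(m+1)+1 = 2*m+3 by omega,
        show 2*(m+1) = 2*m+2 by omega, ee_unfold]
      have ce1 : Commute b.e (b.g (2*m+1)) := b.e_g _ (by omega) (by omega)
      have ce2 : Commute b.e (b.g (2*m+2)) := b.e_g _ (by omega) (by omega)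
      have ce3 : Commute b.e (b.g (2*m+3)) := b.e_g _ (by omega) (by omega)
      have cei1 : Commute b.e (b.ginv (2*m+1)) := qb_e_ginv b _ (by omega) (by omega)
      have cei2 : Commute b.e (b.ginv (2*m+2)) := qb_e_ginv b _ (by omega) (by omega)
      have cei3 : Commute b.e (b.ginv (2*m+3)) := qb_e_ginv b _ (by omega) (by omega)
      -- shifts through P = gp b 2 (2*t+3)
      have hPc : ∀ z : A, b.g (2*m+1) * (gp b 2 (2*t+3) * z)
          = gp b 2 (2*t+3) * (b.g (2*m) * z) :=
        fun z => qb_shift_mid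
          (qb_shift_gp_g b 2 (2*t+3) (2*m) (by omega) (by omega) (by omega) (by omega)) z
      have hPa : ∀ z : A, b.g (2*m+2) * (gp b 2 (2*t+3) * z)
          = gp b 2 (2*t+3) * (b.g (2*m+1) * z) := by
        have h := qb_shift_gp_g b 2 (2*t+3) (2*m+1) (by omega) (by omega) (by omega) (by omega)
        rw [show 2*m+1+1 = 2*m+2 by omega] at h
        exact fun z => qb_shift_mid h z
      have hPb : ∀ z : A, b.g (2*m+3) * (gp b 2 (2*t+3) * z)
          = gp b 2 (2*t+3) * (b.g (2*m+2) * z) := by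
        have h := qb_shift_gp_g b 2 (2*t+3) (2*m+2) (by omega) (by omega) (by omega) (by omega)
        rw [show 2*m+2+1 = 2*m+3 by omega] at h
        exact fun z => qb_shift_mid h z
      have hPc' : ∀ z : A, b.ginv (2*m+1) * (gp b 2 (2*t+3) * z)
          = gp b 2 (2*t+3) * (b.ginv (2*m) * z) :=
        fun z => qb_shift_mid
          (qb_shift_gp_ginv b 2 (2*t+3) (2*m) (by omega) (by omega) (by omega) (by omega)) z
      have hPa' : ∀ z : A, b.ginv (2*m+2) * (gp b 2 (2*t+3) * z)
          = gp b 2 (2*t+3) * (b.ginv (2*m+1) * z) := by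
        have h := qb_shift_gp_ginv b 2 (2*t+3) (2*m+1) (by omega) (by omega) (by omega) (by omega)
        rw [show 2*m+1+1 = 2*m+2 by omega] at h
        exact fun z => qb_shift_mid h z
      have hPb' : ∀ z : A, b.ginv (2*m+3) * (gp b 2 (2*t+3) * z)
          = gp b 2 (2*t+3) * (b.ginv (2*m+2) * z) := by
        have h := qb_shift_gp_ginv b 2 (2*t+3) (2*m+2) (by omega) (by omega) (by omega) (by omega)
        rw [show 2*m+2+1 = 2*m+3 by omega] at h
        exact fun z => qb_shift_mid h z
      -- shifts through Q = gm b 1 (2*t+2)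
      have hQa : ∀ z : A, b.g (2*m+1) * (gm b 1 (2*t+2) * z)
          = gm b 1 (2*t+2) * (b.g (2*m) * z) :=
        fun z => qb_shift_mid
          (qb_shift_gm_g b 1 (2*t+2) (2*m) (by omega) (by omega) (by omega) (by omega)) z
      have hQb : ∀ z : A, b.g (2*m+2) * (gm b 1 (2*t+2) * z)
          = gm b 1 (2*t+2) * (b.g (2*m+1) * z) := by
        have h := qb_shift_gm_g b 1 (2*t+2) (2*m+1) (by omega) (by omega) (by omega) (by omega)
        rw [show 2*m+1+1 = 2*m+2 by omega] at h
        exact fun z => qb_shift_mid h z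
      have hQc : ∀ z : A, b.g (2*m) * (gm b 1 (2*t+2) * z)
          = gm b 1 (2*t+2) * (b.g (2*m-1) * z) := by
        have h := qb_shift_gm_g b 1 (2*t+2) (2*m-1) (by omega) (by omega) (by omega) (by omega)
        rw [show 2*m-1+1 = 2*m by omega] at h
        exact fun z => qb_shift_mid h z
      have hQa' : ∀ z : A, b.ginv (2*m+1) * (gm b 1 (2*t+2) * z)
          = gm b 1 (2*t+2) * (b.ginv (2*m) * z) :=
        fun z => qb_shift_mid
          (qb_shift_gm_ginv b 1 (2*t+2) (2*m) (by omega) (by omega) (by omega) (by omega)) z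
      have hQb' : ∀ z : A, b.ginv (2*m+2) * (gm b 1 (2*t+2) * z)
          = gm b 1 (2*t+2) * (b.ginv (2*m+1) * z) := by
        have h := qb_shift_gm_ginv b 1 (2*t+2) (2*m+1) (by omega) (by omega) (by omega) (by omega)
        rw [show 2*m+1+1 = 2*m+2 by omega] at h
        exact fun z => qb_shift_mid h z
      have hQc' : ∀ z : A, b.ginv (2*m) * (gm b 1 (2*t+2) * z)
          = gm b 1 (2*t+2) * (b.ginv (2*m-1) * z) := by
        have h := qb_shift_gm_ginv b 1 (2*t+2) (2*m-1) (by omega) (by omega) (by omega) (by omega)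
        rw [show 2*m-1+1 = 2*m by omega] at h
        exact fun z => qb_shift_mid h z
      have IH := ih hm (t+1) (by omega) (by omega)
      constructor
      · rw [qb_comm_shift ce2, qb_comm_shift ce1, qb_comm_shift ce3,
          hPa, hPc, hPb, hQa, hQc, hQb, IH.1]
      · rw [qb_comm_shift cei2, qb_comm_shift cei1, qb_comm_shift cei3,
          hPa', hPc', hPb', hQa', hQc', hQb', IH.2]

/-- Lemma 3.2(c): for `1 ≤ j < k`, `g_{2j-1} g_{2j} e_{(k)} = g_{2j+1} g_{2j} e_{(k)}` and
`g_{2j-1}⁻¹ g_{2j}⁻¹ e_{(k)} = g_{2j+1}⁻¹ g_{2j}⁻¹ e_{(k)}`. -/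
theorem g_g_ee (b : QBrauer R q r δ n A) (j k : ℕ)
    (hj : 1 ≤ j) (hjk : j < k) (hk : 2*k ≤ n) :
    b.g (2*j-1) * b.g (2*j) * ee b k = b.g (2*j+1) * b.g (2*j) * ee b k ∧
    b.ginv (2*j-1) * b.ginv (2*j) * ee b k = b.ginv (2*j+1) * b.ginv (2*j) * ee b k := by
  obtain ⟨h1, h2⟩ := qb_main b j hj k hjk hk
  constructor
  · simpa only [mul_assoc] using h1
  · simpa only [mul_assoc] using h2
end

section
/- Let ω ∈ B*_{k,n} (so that the corresponding Brauer diagram d* = ω e_{(k)} has no crossings among vertical edges and ℓ(d*) = ℓ(ω)) and let π ∈ S_{2k+1,n}, the subgroup of S_n generated by s_{2k+1},...,s_{n-1}. Then ℓ(ωπ) = ℓ(ω) + ℓ(π). -/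
/-- The simple transposition `s_i = (i, i+1)`, acting on the vertices `1, …, n` (inside `ℕ`). -/
def simpleT (i : ℕ) : Equiv.Perm ℕ := Equiv.swap i (i + 1)

/-- `sseq i j = s_i s_{i+1} ⋯ s_j` for `i ≤ j`. -/
def sseq (i j : ℕ) : Equiv.Perm ℕ := ((List.range' i (j + 1 - i)).map simpleT).prod

/-- The factor `t_j`: the identity if `t j = 0`, and `s_{t j, j} = s_{t j} s_{t j + 1} ⋯ s_j`
if `1 ≤ t j ≤ j`. -/
def tfac (t : ℕ → ℕ) (j : ℕ) : Equiv.Perm ℕ := if t j = 0 then 1 else sseq (t j) j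

/-- The Coxeter length of `σ ∈ S_n`: the number of inversions
`{(i, j) : 1 ≤ i < j ≤ n, σ j < σ i}`. -/
def len (n : ℕ) (σ : Equiv.Perm ℕ) : ℕ :=
  ((Finset.Icc 1 n ×ˢ Finset.Icc 1 n).filter fun p => p.1 < p.2 ∧ σ p.2 < σ p.1).card

/-- The vertical factor `s_{f(j+1), j}` (the identity when `f(j+1) = j+1`). -/
def vfac (f : ℕ → ℕ) (j : ℕ) : Equiv.Perm ℕ :=
  if f (j+1) = j + 1 then 1 else sseq (f (j+1)) j

/-- The vertical part `s_{f(n), n-1} s_{f(n-1), n-2} ⋯ s_{f(2k+1), 2k}`. -/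
def vertPart (n k : ℕ) (f : ℕ → ℕ) : Equiv.Perm ℕ :=
  (((List.range' (2*k) (n - 2*k)).reverse).map (vfac f)).prod

/-- The horizontal part `t_{2k-2} t_{2k-4} ⋯ t_2`. -/
def evenPart (k : ℕ) (t : ℕ → ℕ) : Equiv.Perm ℕ :=
  (((List.range (k-1)).map (fun m => tfac t (2*(m+1)))).reverse).prod

/-- The set `B*_{k,n}` of permutations of the form
`ω = s_{f(n), n-1} s_{f(n-1), n-2} ⋯ s_{f(2k+1), 2k} ⋅ s_{i_{2k-2}, 2k-2} ⋯ s_{i_2, 2}` with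
`1 ≤ f(j) ≤ j` and `f(2k+1) < f(2k+2) < ⋯ < f(n)` (so that the corresponding Brauer diagram
`d* = ω e_{(k)}` has no crossings among vertical edges and `ℓ(d*) = ℓ(ω)`). -/
def BstarKN (n k : ℕ) : Set (Equiv.Perm ℕ) :=
  {ω | ∃ f t : ℕ → ℕ,
    (∀ j, 2*k+1 ≤ j → j ≤ n → 1 ≤ f j ∧ f j ≤ j) ∧
    (∀ j j', 2*k+1 ≤ j → j < j' → j' ≤ n → f j < f j') ∧
    (∀ j, t j ≤ j) ∧
    ω = vertPart n k f * evenPart k t}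

/-- The subgroup `S_{2k+1,n} ≤ S_n` generated by `s_{2k+1}, …, s_{n-1}`. -/
def Ssub (n k : ℕ) : Subgroup (Equiv.Perm ℕ) :=
  Subgroup.closure {σ | ∃ i, 2*k+1 ≤ i ∧ i < n ∧ σ = simpleT i}

section Aux

open Equiv

lemma prod_fix (l : List (Equiv.Perm ℕ)) (x : ℕ) (h : ∀ σ ∈ l, σ x = x) :
    l.prod x = x := by
  induction l with
  | nil => rfl
  | cons a l ih =>
    rw [List.prod_cons, Equiv.Perm.mul_apply,
      ih (fun σ hσ => h σ (List.mem_cons_of_mem _ hσ)), h a (List.mem_cons_self)]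

lemma sseq_fix {i j x : ℕ} (h : x < i ∨ j + 1 < x) : sseq i j x = x := by
  apply prod_fix
  intro σ hσ
  simp only [List.mem_map, List.mem_range'_1] at hσ
  obtain ⟨e, he, rfl⟩ := hσ
  unfold simpleT
  apply Equiv.swap_apply_of_ne_of_ne <;> omega

lemma sseq_aux : ∀ (m i : ℕ), (((List.range' i (m+1)).map simpleT).prod) (i+m+1) = i := by
  intro m
  induction m with
  | zero =>
    intro i
    simp [simpleT, List.range']
  | succ m ih =>
    intro i
    rw [List.range'_succ]
    simp only [List.map_cons, List.prod_cons, Equiv.Perm.mul_apply]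
    have h2 := ih (i+1)
    rw [show i + (m+1) + 1 = (i+1) + m + 1 by omega, h2]
    simp [simpleT]

lemma sseq_last {i j : ℕ} (h : i ≤ j) : sseq i j (j+1) = i := by
  unfold sseq
  rw [show j + 1 - i = (j - i) + 1 by omega]
  have h2 := sseq_aux (j-i) i
  rwa [show i + (j-i) + 1 = j+1 by omega] at h2

lemma evenPart_fix (k : ℕ) (t : ℕ → ℕ) (x : ℕ) (hx : 2*k ≤ x) : evenPart k t x = x := by
  apply prod_fix
  intro σ hσ
  simp only [List.mem_reverse, List.mem_map, List.mem_range] at hσ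
  obtain ⟨m, hm, rfl⟩ := hσ
  unfold tfac
  split
  · rfl
  · exact sseq_fix (Or.inr (by omega))

lemma vfac_fix_hi (f : ℕ → ℕ) (j x : ℕ) (h : j + 1 < x) : vfac f j x = x := by
  unfold vfac
  split
  · rfl
  · exact sseq_fix (Or.inr h)

lemma vaux (k : ℕ) (f : ℕ → ℕ) : ∀ (m : ℕ),
    (∀ j, 2*k+1 ≤ j → j ≤ 2*k+m → f j ≤ j) →
    (∀ j j', 2*k+1 ≤ j → j < j' → j' ≤ 2*k+m → f j < f j') →
    ∀ a, 2*k+1 ≤ a → a ≤ 2*k+m →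
    (((List.range' (2*k) m).reverse).map (vfac f)).prod a = f a := by
  intro m
  induction m with
  | zero => intro _ _ a ha1 ha2; omega
  | succ m ih =>
    intro hf hmono a ha1 ha2
    rw [List.range'_concat, List.reverse_append]
    simp only [List.reverse_singleton, List.singleton_append, List.map_cons, List.prod_cons,
      Equiv.Perm.mul_apply, one_mul]
    rcases Nat.lt_or_ge a (2*k+m+1) with hcase | hcase
    · have hPm : (((List.range' (2*k) m).reverse).map (vfac f)).prod a = f a :=
        ih (fun j h1 h2 => hf j h1 (by omega)) (fun j j' h1 h2 h3 => hmono j j' h1 h2 (by omega))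
          a ha1 (by omega)
      rw [hPm]
      have hlt : f a < f (2*k + m + 1) :=
        hmono a (2*k+m+1) ha1 (by omega) (by omega)
      unfold vfac
      split
      · rfl
      · exact sseq_fix (Or.inl hlt)
    · have ha : a = 2*k+m+1 := by omega
      have hPm : (((List.range' (2*k) m).reverse).map (vfac f)).prod a = a := by
        apply prod_fix
        intro σ hσ
        simp only [List.mem_map, List.mem_reverse, List.mem_range'_1] at hσ
        obtain ⟨e, he, rfl⟩ := hσ
        exact vfac_fix_hi f e a (by omega)
      rw [hPm]
      have hfa : f a ≤ a := hf a ha1 (by omega)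
      unfold vfac
      split
      · next h0 =>
        simp only [Equiv.Perm.one_apply]
        rw [ha]
        omega
      · next h0 =>
        rw [ha] at hfa ⊢
        exact sseq_last (by omega)

lemma vertPart_apply (n k : ℕ) (f : ℕ → ℕ) (h : 2*k ≤ n)
    (hf : ∀ j, 2*k+1 ≤ j → j ≤ n → 1 ≤ f j ∧ f j ≤ j)
    (hmono : ∀ j j', 2*k+1 ≤ j → j < j' → j' ≤ n → f j < f j')
    (a : ℕ) (ha1 : 2*k+1 ≤ a) (ha2 : a ≤ n) : vertPart n k f a = f a := by
  unfold vertPart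
  exact vaux k f (n - 2*k) (fun j h1 h2 => (hf j h1 (by omega)).2)
    (fun j j' h1 h2 h3 => hmono j j' h1 h2 (by omega)) a ha1 (by omega)

lemma ssub_prop {n k : ℕ} {π : Equiv.Perm ℕ} (hπ : π ∈ Ssub n k) :
    (∀ x, x < 2*k+1 ∨ n < x → π x = x) ∧
    (∀ x, 2*k+1 ≤ x → x ≤ n → 2*k+1 ≤ π x ∧ π x ≤ n) := by
  refine Subgroup.closure_induction ?_ ?_ ?_ ?_ hπ
  · rintro σ ⟨i, hi1, hi2, rfl⟩
    constructor
    · intro x hx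
      unfold simpleT
      apply Equiv.swap_apply_of_ne_of_ne <;> omega
    · intro x hx1 hx2
      unfold simpleT
      rw [Equiv.swap_apply_def]
      split_ifs <;> omega
  · exact ⟨fun x _ => rfl, fun x h1 h2 => ⟨h1, h2⟩⟩
  · rintro σ τ _ _ ⟨hσ1, hσ2⟩ ⟨hτ1, hτ2⟩
    constructor
    · intro x hx
      rw [Equiv.Perm.mul_apply, hτ1 x hx, hσ1 x hx]
    · intro x h1 h2
      rw [Equiv.Perm.mul_apply]
      exact hσ2 _ (hτ2 x h1 h2).1 (hτ2 x h1 h2).2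
  · rintro σ _ ⟨hσ1, hσ2⟩
    constructor
    · intro x hx
      have := hσ1 x hx
      conv_lhs => rw [← this]
      exact σ.symm_apply_apply x
    · intro x h1 h2
      by_contra hc
      have hfix : σ (σ⁻¹ x) = σ⁻¹ x := by
        apply hσ1
        omega
      rw [show σ (σ⁻¹ x) = x from σ.apply_symm_apply x] at hfix
      rw [← hfix] at hc
      exact hc ⟨h1, h2⟩

end Aux

/-- For `ω ∈ B*_{k,n}` and `π ∈ S_{2k+1,n}`, lengths add: `ℓ(ωπ) = ℓ(ω) + ℓ(π)`. -/
theorem len_mul_of_BstarKN (n k : ℕ) (h : 2*k ≤ n) (ω π : Equiv.Perm ℕ)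
    (hω : ω ∈ BstarKN n k) (hπ : π ∈ Ssub n k) :
    len n (ω * π) = len n ω + len n π := by
  obtain ⟨f, t, hf, hmono, ht, hωeq⟩ := hω
  obtain ⟨hπfix, hπmem⟩ := ssub_prop hπ
  obtain ⟨hπifix, hπimem⟩ := ssub_prop (inv_mem hπ : π⁻¹ ∈ Ssub n k)
  -- ω is strictly increasing on [2k+1, n]
  have hωval : ∀ a, 2*k+1 ≤ a → a ≤ n → ω a = f a := by
    intro a h1 h2
    rw [hωeq, Equiv.Perm.mul_apply, evenPart_fix k t a (by omega),
      vertPart_apply n k f h hf hmono a h1 h2]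
  have hωmono : ∀ a b, 2*k+1 ≤ a → a < b → b ≤ n → ω a < ω b := by
    intro a b h1 h2 h3
    rw [hωval a h1 (by omega), hωval b (by omega) h3]
    exact hmono a b h1 h2 h3
  -- inversions of π live in the block [2k+1, n]
  have hblk : ∀ i j : ℕ, j ≤ n → i < j → π j < π i →
      2*k+1 ≤ i ∧ i ≤ n ∧ 2*k+1 ≤ j ∧ j ≤ n := by
    intro i j hjn hij hinv
    by_cases hi : 2*k+1 ≤ i
    · exact ⟨hi, by omega, by omega, hjn⟩
    · exfalso
      push_neg at hi
      have hfi : π i = i := hπfix i (Or.inl hi)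
      by_cases hj : 2*k+1 ≤ j
      · have := hπmem j hj hjn
        omega
      · push_neg at hj
        have hfj : π j = j := hπfix j (Or.inl hj)
        omega
  have key : ∀ i j : ℕ, j ≤ n → i < j → π j < π i → (ω * π) j < (ω * π) i := by
    intro i j hjn hij hinv
    obtain ⟨h1, h2, h3, h4⟩ := hblk i j hjn hij hinv
    have hi' := hπmem i h1 h2
    have hj' := hπmem j h3 h4
    simp only [Equiv.Perm.mul_apply]
    exact hωmono (π j) (π i) hj'.1 hinv hi'.2
  -- π maps Icc 1 n to itself
  have hπIcc : ∀ x, 1 ≤ x → x ≤ n → 1 ≤ π x ∧ π x ≤ n := by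
    intro x h1 h2
    by_cases hx : 2*k+1 ≤ x
    · have := hπmem x hx h2; omega
    · rw [hπfix x (Or.inl (by omega))]; omega
  have hπiIcc : ∀ x, 1 ≤ x → x ≤ n → 1 ≤ π⁻¹ x ∧ π⁻¹ x ≤ n := by
    intro x h1 h2
    by_cases hx : 2*k+1 ≤ x
    · have := hπimem x hx h2; omega
    · rw [hπifix x (Or.inl (by omega))]; omega
  classical
  set I := Finset.Icc 1 n ×ˢ Finset.Icc 1 n with hI
  set A₁ := I.filter (fun p => p.1 < p.2 ∧ π p.1 < π p.2 ∧ (ω * π) p.2 < (ω * π) p.1) with hA₁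
  set A₂ := I.filter (fun p => p.1 < p.2 ∧ π p.2 < π p.1) with hA₂
  have hmemI : ∀ p : ℕ × ℕ, p ∈ I ↔ (1 ≤ p.1 ∧ p.1 ≤ n) ∧ (1 ≤ p.2 ∧ p.2 ≤ n) := by
    intro p
    simp [hI, Finset.mem_product, Finset.mem_Icc]
  have hsplit : I.filter (fun p => p.1 < p.2 ∧ (ω * π) p.2 < (ω * π) p.1) = A₁ ∪ A₂ := by
    ext p
    simp only [hA₁, hA₂, Finset.mem_union, Finset.mem_filter]
    constructor
    · rintro ⟨hpI, h12, hinv⟩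
      rcases lt_trichotomy (π p.1) (π p.2) with hc | hc | hc
      · exact Or.inl ⟨hpI, h12, hc, hinv⟩
      · exact absurd (π.injective hc) (by omega)
      · exact Or.inr ⟨hpI, h12, hc⟩
    · rintro (⟨hpI, h12, _, hinv⟩ | ⟨hpI, h12, hc⟩)
      · exact ⟨hpI, h12, hinv⟩
      · refine ⟨hpI, h12, key p.1 p.2 ?_ h12 hc⟩
        exact ((hmemI p).1 hpI).2.2
  have hdisj : Disjoint A₁ A₂ := by
    rw [Finset.disjoint_left]
    intro p hp1 hp2
    simp only [hA₁, hA₂, Finset.mem_filter] at hp1 hp2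
    omega
  have hcard1 : A₁.card = len n ω := by
    rw [len]
    apply Finset.card_bij' (fun p _ => (π p.1, π p.2)) (fun q _ => (π⁻¹ q.1, π⁻¹ q.2))
    · intro p hp
      simp only [hA₁, Finset.mem_filter] at hp
      obtain ⟨hpI, h12, hc, hinv⟩ := hp
      rw [hmemI p] at hpI
      simp only [Finset.mem_filter, Equiv.Perm.mul_apply] at hinv ⊢
      refine ⟨(hmemI _).2 ⟨hπIcc p.1 hpI.1.1 hpI.1.2, hπIcc p.2 hpI.2.1 hpI.2.2⟩, hc, hinv⟩
    · intro q hq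
      simp only [Finset.mem_filter] at hq
      obtain ⟨hqI, h12, hinv⟩ := hq
      rw [hmemI q] at hqI
      have hi1 := hπiIcc q.1 hqI.1.1 hqI.1.2
      have hi2 := hπiIcc q.2 hqI.2.1 hqI.2.2
      have hlt : π⁻¹ q.1 < π⁻¹ q.2 := by
        rcases lt_trichotomy (π⁻¹ q.1) (π⁻¹ q.2) with hc | hc | hc
        · exact hc
        · exfalso; have := congrArg π hc; simp at this; omega
        · exfalso
          have hk := key (π⁻¹ q.2) (π⁻¹ q.1) hi1.2 hc
            (by simp only [Equiv.Perm.coe_inv, Equiv.apply_symm_apply]; exact h12)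
          simp only [Equiv.Perm.mul_apply, Equiv.Perm.coe_inv, Equiv.apply_symm_apply] at hk
          omega
      rw [hA₁, Finset.mem_filter]; simp only [Equiv.Perm.mul_apply, Equiv.Perm.coe_inv, Equiv.apply_symm_apply]
      exact ⟨(hmemI _).2 ⟨hi1, hi2⟩, hlt, h12, hinv⟩
    · intro p _
      simp
    · intro q _
      simp
  have hcard2 : A₂.card = len n π := rfl
  rw [len, hsplit, Finset.card_union_of_disjoint hdisj, hcard1, hcard2]
end
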